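/- Let q be odd and f as above (f(x) = α_{wt(x)} for wt(x) ≤ k, f(x) = 0 for wt(x) > k, with n > 3, 2 ≤ k ≤ n−2). Then for every two hyperplanes H(v), H(v') through the origin, if V(f)* ∩ H(v) ⊆ H(v'), then H(v) = H(v'). -/

import Mathlib

/-- let `q` be odd and `f(x) = α_{wt(x)}` if `wt(x) ≤ k`, `f(x) = 0`
otherwise, where `n > 3`, `2 ≤ k ≤ n - 2` and `α_1, …, α_k ∈ F_q^*`.  Then for any
two hyperplanes `H(v), H(v')` through the origin, `V(f)* ∩ H(v) ⊆ H(v')` implies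
`H(v) = H(v')`. -/
theorem stmt15 (F : Type) [Field F] [Fintype F] [DecidableEq F]
    (hq : Odd (Fintype.card F)) (n k : ℕ) (hn : 3 < n) (hk2 : 2 ≤ k) (hkn : k ≤ n - 2)
    (α : ℕ → F) (hα : ∀ i, 1 ≤ i → i ≤ k → α i ≠ 0)
    (f : (Fin n → F) → F)
    (hf : ∀ x : Fin n → F, f x = if hammingNorm x ≤ k then α (hammingNorm x) else 0) :
    ∀ v v' : Fin n → F, v ≠ 0 → v' ≠ 0 →
      ({x : Fin n → F | x ≠ 0 ∧ f x = 0} ∩ {x : Fin n → F | ∑ i, v i * x i = 0} ⊆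
          {x : Fin n → F | ∑ i, v' i * x i = 0}) →
      {x : Fin n → F | ∑ i, v i * x i = 0} = {x : Fin n → F | ∑ i, v' i * x i = 0} := by
  intro v v' hv hv' hsub
  classical
  have hcard : 3 ≤ Fintype.card F := by
    obtain ⟨m, hm⟩ := hq
    have h2 : 1 < Fintype.card F := Fintype.one_lt_card
    omega
  obtain ⟨j, hj⟩ : ∃ j, v j ≠ 0 := by
    by_contra h; push_neg at h; exact hv (funext h)
  -- helper: weight bound
  have hwt : ∀ z : Fin n → F, (∀ i, i ≠ j → z i ≠ 0) → k < hammingNorm z := by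
    intro z hz
    have hsubset : Finset.univ.erase j ⊆ Finset.univ.filter (fun i => z i ≠ 0) := by
      intro i hi
      rw [Finset.mem_erase] at hi
      exact Finset.mem_filter.2 ⟨Finset.mem_univ _, hz i hi.1⟩
    have hc := Finset.card_le_card hsubset
    rw [Finset.card_erase_of_mem (Finset.mem_univ j), Finset.card_univ, Fintype.card_fin] at hc
    have : hammingNorm z = (Finset.univ.filter (fun i => z i ≠ 0)).card := rfl
    omega
  have hmem : ∀ z : Fin n → F, (∀ i, i ≠ j → z i ≠ 0) → (∑ i, v i * z i = 0) →
      ∑ i, v' i * z i = 0 := by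
    intro z hz hvz
    have hk : k < hammingNorm z := hwt z hz
    have hz0 : z ≠ 0 := by
      intro h
      rw [h] at hk
      simp [hammingNorm] at hk
    have hfz : f z = 0 := by rw [hf]; rw [if_neg (by omega)]
    exact hsub ⟨⟨hz0, hfz⟩, hvz⟩
  -- key: ker v ⊆ ker v'
  have key : ∀ x : Fin n → F, ∑ i, v i * x i = 0 → ∑ i, v' i * x i = 0 := by
    intro x hx
    have hb : ∀ i : Fin n, ∃ b : F, b ≠ 0 ∧ x i + b ≠ 0 := by
      intro i
      have hne : (({0, -x i} : Finset F))ᶜ.Nonempty := by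
        rw [← Finset.card_pos, Finset.card_compl]
        have hle : ({0, -x i} : Finset F).card ≤ 2 :=
          le_trans (Finset.card_insert_le _ _) (by simp)
        omega
      obtain ⟨c, hcmem⟩ := hne
      simp only [Finset.mem_compl, Finset.mem_insert, Finset.mem_singleton, not_or] at hcmem
      exact ⟨c, hcmem.1, fun h => hcmem.2 (eq_neg_of_add_eq_zero_right h)⟩
    choose b hb0 hbx using hb
    set S : F := ∑ i ∈ Finset.univ.erase j, v i * b i with hS
    set y : Fin n → F := fun i => if i = j then -S / v j else b i with hy
    have hyi : ∀ i, i ≠ j → y i = b i := by intro i hi; simp [hy, hi]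
    have hvy : ∑ i, v i * y i = 0 := by
      rw [← Finset.add_sum_erase _ _ (Finset.mem_univ j)]
      have : ∑ i ∈ Finset.univ.erase j, v i * y i = S := by
        apply Finset.sum_congr rfl
        intro i hi
        rw [hyi i (Finset.mem_erase.1 hi).1]
      rw [this]
      have : y j = -S / v j := by simp [hy]
      rw [this]
      field_simp
      ring
    have hv'y : ∑ i, v' i * y i = 0 :=
      hmem y (fun i hi => by rw [hyi i hi]; exact hb0 i) hvy
    have hv'xy : ∑ i, v' i * (x i + y i) = 0 := by
      apply hmem
      · intro i hi
        rw [hyi i hi]; exact hbx i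
      · have : ∑ i, v i * (x i + y i) = (∑ i, v i * x i) + ∑ i, v i * y i := by
          rw [← Finset.sum_add_distrib]
          exact Finset.sum_congr rfl fun i _ => mul_add _ _ _
        rw [this, hx, hvy, add_zero]
    have : ∑ i, v' i * (x i + y i) = (∑ i, v' i * x i) + ∑ i, v' i * y i := by
      rw [← Finset.sum_add_distrib]
      exact Finset.sum_congr rfl fun i _ => mul_add _ _ _
    rw [this, hv'y, add_zero] at hv'xy
    exact hv'xy
  -- Step C: derive set equality
  set w : Fin n → F := fun i => if i = j then 1 else 0 with hw
  have hvw : ∑ i, v i * w i = v j := by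
    simp [hw, mul_ite]
  have hform : ∀ z : Fin n → F,
      ∑ i, v' i * z i = (∑ i, v i * z i) / v j * ∑ i, v' i * w i := by
    intro z
    set c : F := (∑ i, v i * z i) / v j with hc
    have h1 : ∑ i, v i * (z i - c * w i) = 0 := by
      have : ∑ i, v i * (z i - c * w i)
          = (∑ i, v i * z i) - c * ∑ i, v i * w i := by
        rw [Finset.mul_sum, ← Finset.sum_sub_distrib]
        exact Finset.sum_congr rfl fun i _ => by ring
      rw [this, hvw, hc]
      field_simp
      ring
    have h2 := key _ h1
    have : ∑ i, v' i * (z i - c * w i)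
        = (∑ i, v' i * z i) - c * ∑ i, v' i * w i := by
      rw [Finset.mul_sum, ← Finset.sum_sub_distrib]
      exact Finset.sum_congr rfl fun i _ => by ring
    rw [this, sub_eq_zero] at h2
    exact h2
  have hv'w : ∑ i, v' i * w i ≠ 0 := by
    intro h0
    apply hv'
    funext u
    have := hform (fun i => if i = u then 1 else 0)
    rw [h0, mul_zero] at this
    simpa [mul_ite] using this
  ext z
  simp only [Set.mem_setOf_eq]
  constructor
  · intro hz
    rw [hform z, hz, zero_div, zero_mul]
  · intro hz
    rw [hform z] at hz
    rcases mul_eq_zero.1 hz with h | h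
    · rcases div_eq_zero_iff.1 h with h' | h'
      · exact h'
      · exact absurd h' hj
    · exact absurd h hv'w
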